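/- Let G = G_l ⊗ G_r be a true twin composition, and assume D_k(H) ≠ ∅ for each H ∈ {G, G_l, G_r} and each 0 ≤ k ≤ |TS(H)|. Then γ_0(G) = min{γ_i(G_l) + γ_i(G_r) : 0 ≤ i ≤ min(|TS(G_l)|, |TS(G_r)|)}. -/
import Mathlib


/-- A finite simple graph on a subset of an ambient vertex type `α`,
together with a designated twin set `TS ⊆ verts`. -/
structure TSGraph (α : Type*) where
  verts : Finset α
  Adj : α → α → Prop
  symm : ∀ u v, Adj u v → Adj v u
  irrefl : ∀ u, ¬ Adj u u
  adj_mem : ∀ u v, Adj u v → u ∈ verts ∧ v ∈ verts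
  TS : Finset α
  TS_sub : TS ⊆ verts

namespace TSGraph

variable {α : Type*} [DecidableEq α]

/-- `f` encodes a perfect matching of the subgraph of `G` induced by `S`:
every vertex of `S` is paired with an adjacent vertex of `S`, involutively. -/
def IsPM (G : TSGraph α) (S : Finset α) (f : α → α) : Prop :=
  ∀ v ∈ S, f v ∈ S ∧ G.Adj v (f v) ∧ f (f v) = v

/-- `S ⊆ V(G)` dominates `V(G) − TS(G)` and, for some `X ⊆ S ∩ TS(G)` of size `k`,
the subgraph induced by `S − X` has a perfect matching. -/
def Adm (G : TSGraph α) (k : ℕ) (S : Finset α) : Prop :=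
  S ⊆ G.verts ∧
  (∀ v ∈ G.verts, v ∉ G.TS → v ∈ S ∨ ∃ u ∈ S, G.Adj u v) ∧
  ∃ X ⊆ S ∩ G.TS, X.card = k ∧ ∃ f, G.IsPM (S \ X) f

/-- Membership in the family `D_k(G)`: admissible of minimum cardinality. -/
def memD (G : TSGraph α) (k : ℕ) (S : Finset α) : Prop :=
  G.Adm k S ∧ ∀ S', G.Adm k S' → S.card ≤ S'.card

/-- `D_k(G) ≠ ∅`. -/
def DkNonempty (G : TSGraph α) (k : ℕ) : Prop := ∃ S, G.memD k S

/-- `D_k(G) ≠ ∅` for all `0 ≤ k ≤ |TS(G)|`. -/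
def AllDkNonempty (G : TSGraph α) : Prop := ∀ k ≤ G.TS.card, G.DkNonempty k

/-- `γ_k(G)`: the common cardinality of the members of `D_k(G)`. -/
noncomputable def gamma (G : TSGraph α) (k : ℕ) : ℕ :=
  sInf {n | ∃ S, G.Adm k S ∧ S.card = n}

/-- A paired-dominating set of `G`. -/
def IsPDS (G : TSGraph α) (D : Finset α) : Prop :=
  D ⊆ G.verts ∧
  (∀ v ∈ G.verts, v ∈ D ∨ ∃ u ∈ D, G.Adj u v) ∧
  ∃ f, G.IsPM D f

/-- `γ_p(G)`: the paired-domination number. -/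
noncomputable def gammaP (G : TSGraph α) : ℕ :=
  sInf {n | ∃ D, G.IsPDS D ∧ D.card = n}

/-- Membership in `D_p(G)`: minimum-cardinality paired-dominating sets. -/
def memDp (G : TSGraph α) (D : Finset α) : Prop :=
  G.IsPDS D ∧ D.card = G.gammaP

/-- `min(G) = min { γ_k(G) : 0 ≤ k ≤ |TS(G)| }`. -/
noncomputable def minVal (G : TSGraph α) : ℕ :=
  sInf {n | ∃ k ≤ G.TS.card, G.gamma k = n}

/-- `α(G)`: the smallest `k` with `γ_k(G) = min(G)`. -/
noncomputable def alphaVal (G : TSGraph α) : ℕ :=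
  sInf {k | k ≤ G.TS.card ∧ G.gamma k = G.minVal}

/-- `β(G)`: the largest `k` with `γ_k(G) = min(G)`. -/
noncomputable def betaVal (G : TSGraph α) : ℕ :=
  sSup {k | k ≤ G.TS.card ∧ G.gamma k = G.minVal}

/-- Membership in `Ψ(G)`: sets in some `D_k(G)` of cardinality `min(G)`. -/
def memPsi (G : TSGraph α) (D : Finset α) : Prop :=
  (∃ k, k ≤ G.TS.card ∧ G.memD k D) ∧ D.card = G.minVal

/-- Equation (2) holds for `G`. -/
def Eq2Holds (G : TSGraph α) : Prop :=
  ∀ k ≤ G.TS.card,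
    (k ≤ G.alphaVal → G.gamma k = G.minVal + G.alphaVal - k) ∧
    (G.betaVal ≤ k → G.gamma k = G.minVal + k - G.betaVal) ∧
    (G.alphaVal < k → k < G.betaVal → Even (k - G.alphaVal) → G.gamma k = G.minVal) ∧
    (G.alphaVal < k → k < G.betaVal → ¬ Even (k - G.alphaVal) → G.gamma k = G.minVal + 1)

/-- `G = Gl ⊗ Gr` (true twin composition). -/
def IsTrueTwin (G Gl Gr : TSGraph α) : Prop :=
  Disjoint Gl.verts Gr.verts ∧
  G.verts = Gl.verts ∪ Gr.verts ∧
  (∀ u v, G.Adj u v ↔ Gl.Adj u v ∨ Gr.Adj u v ∨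
    (u ∈ Gl.TS ∧ v ∈ Gr.TS) ∨ (u ∈ Gr.TS ∧ v ∈ Gl.TS)) ∧
  G.TS = Gl.TS ∪ Gr.TS

/-- `G = Gl ⊙ Gr` (false twin composition). -/
def IsFalseTwin (G Gl Gr : TSGraph α) : Prop :=
  Disjoint Gl.verts Gr.verts ∧
  G.verts = Gl.verts ∪ Gr.verts ∧
  (∀ u v, G.Adj u v ↔ Gl.Adj u v ∨ Gr.Adj u v) ∧
  G.TS = Gl.TS ∪ Gr.TS

/-- `G = Gl ⊕ Gr` (attachment composition). -/
def IsAttach (G Gl Gr : TSGraph α) : Prop :=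
  Disjoint Gl.verts Gr.verts ∧
  G.verts = Gl.verts ∪ Gr.verts ∧
  (∀ u v, G.Adj u v ↔ Gl.Adj u v ∨ Gr.Adj u v ∨
    (u ∈ Gl.TS ∧ v ∈ Gr.TS) ∨ (u ∈ Gr.TS ∧ v ∈ Gl.TS)) ∧
  G.TS = Gl.TS

/-- The twin-set graph `G` arises from a decomposition tree all of whose associated
twin-set graphs satisfy the property `P`. -/
inductive FromDecompTree (P : TSGraph α → Prop) : TSGraph α → Prop where
  | single (G : TSGraph α) (v : α) (hv : G.verts = {v}) (hts : G.TS = {v})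
      (hadj : ∀ u w, ¬ G.Adj u w) (hP : P G) : FromDecompTree P G
  | ttwin (G Gl Gr : TSGraph α) (hl : FromDecompTree P Gl) (hr : FromDecompTree P Gr)
      (h : IsTrueTwin G Gl Gr) (hP : P G) : FromDecompTree P G
  | ftwin (G Gl Gr : TSGraph α) (hl : FromDecompTree P Gl) (hr : FromDecompTree P Gr)
      (h : IsFalseTwin G Gl Gr) (hP : P G) : FromDecompTree P G
  | attach (G Gl Gr : TSGraph α) (hl : FromDecompTree P Gl) (hr : FromDecompTree P Gr)
      (h : IsAttach G Gl Gr) (hP : P G) : FromDecompTree P G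

end TSGraph

open TSGraph in
private lemma pairUp {α : Type*} [DecidableEq α] (A B : Finset α) (h : A.card = B.card)
    (hd : Disjoint A B) :
    ∃ g : α → α, (∀ a ∈ A, g a ∈ B ∧ g (g a) = a) ∧ (∀ b ∈ B, g b ∈ A ∧ g (g b) = b) := by
  classical
  let e : (A : Finset α) ≃ (B : Finset α) := Finset.equivOfCardEq h
  refine ⟨fun x => if hx : x ∈ A then (e ⟨x, hx⟩ : α) else
    if hx : x ∈ B then (e.symm ⟨x, hx⟩ : α) else x, ?_, ?_⟩
  · intro a ha
    have h1 : (e ⟨a, ha⟩ : α) ∈ B := (e ⟨a, ha⟩).2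
    have h2 : (e ⟨a, ha⟩ : α) ∉ A := fun hh => (Finset.disjoint_left.mp hd hh) h1
    refine ⟨by simp [dif_pos ha, h1], ?_⟩
    simp only [dif_pos ha, dif_neg h2, dif_pos h1]
    have : (⟨(e ⟨a, ha⟩ : α), h1⟩ : (B : Finset α)) = e ⟨a, ha⟩ := rfl
    rw [this, Equiv.symm_apply_apply]
  · intro b hb
    have hb' : b ∉ A := fun hh => (Finset.disjoint_left.mp hd hh) hb
    have h1 : (e.symm ⟨b, hb⟩ : α) ∈ A := (e.symm ⟨b, hb⟩).2
    refine ⟨by simp [dif_neg hb', dif_pos hb, h1], ?_⟩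
    simp only [dif_neg hb', dif_pos hb, dif_pos h1]
    have : (⟨(e.symm ⟨b, hb⟩ : α), h1⟩ : (A : Finset α)) = e.symm ⟨b, hb⟩ := rfl
    rw [this, Equiv.apply_symm_apply]

open TSGraph in
/-- For a true twin composition `G = Gl ⊗ Gr` with all `D_k`
families nonempty,
`γ_0(G) = min { γ_i(Gl) + γ_i(Gr) : 0 ≤ i ≤ min(|TS(Gl)|, |TS(Gr)|) }`. -/
theorem stmt10 {α : Type*} [DecidableEq α] (G Gl Gr : TSGraph α)
    (hcomp : IsTrueTwin G Gl Gr)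
    (hG : G.AllDkNonempty) (hGl : Gl.AllDkNonempty) (hGr : Gr.AllDkNonempty) :
    G.gamma 0 =
      sInf {n | ∃ i ≤ min Gl.TS.card Gr.TS.card, Gl.gamma i + Gr.gamma i = n} := by
  classical
  obtain ⟨hdisj, hverts, hadj, hts⟩ := hcomp
  have hdTS : Disjoint Gl.TS Gr.TS := hdisj.mono Gl.TS_sub Gr.TS_sub
  apply le_antisymm
  · -- γ0(G) ≤ sInf RHS
    have hRne : {n | ∃ i ≤ min Gl.TS.card Gr.TS.card, Gl.gamma i + Gr.gamma i = n}.Nonempty :=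
      ⟨Gl.gamma 0 + Gr.gamma 0, 0, Nat.zero_le _, rfl⟩
    obtain ⟨i, hi, hsum⟩ := Nat.sInf_mem hRne
    rw [← hsum]
    have hil : i ≤ Gl.TS.card := le_trans hi (min_le_left _ _)
    have hir : i ≤ Gr.TS.card := le_trans hi (min_le_right _ _)
    have hnel : {n | ∃ S, Gl.Adm i S ∧ S.card = n}.Nonempty := by
      obtain ⟨S, hS⟩ := hGl i hil; exact ⟨S.card, S, hS.1, rfl⟩
    have hner : {n | ∃ S, Gr.Adm i S ∧ S.card = n}.Nonempty := by
      obtain ⟨S, hS⟩ := hGr i hir; exact ⟨S.card, S, hS.1, rfl⟩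
    obtain ⟨Sl, hSl, hcl⟩ := Nat.sInf_mem hnel
    obtain ⟨Sr, hSr, hcr⟩ := Nat.sInf_mem hner
    obtain ⟨hsubl, hdoml, Xl, hXlsub, hXlc, fl, hfl⟩ := hSl
    obtain ⟨hsubr, hdomr, Xr, hXrsub, hXrc, fr, hfr⟩ := hSr
    have hXlTS : Xl ⊆ Gl.TS := hXlsub.trans Finset.inter_subset_right
    have hXrTS : Xr ⊆ Gr.TS := hXrsub.trans Finset.inter_subset_right
    have hXlSl : Xl ⊆ Sl := hXlsub.trans Finset.inter_subset_left
    have hXrSr : Xr ⊆ Sr := hXrsub.trans Finset.inter_subset_left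
    have hXlV : Xl ⊆ Gl.verts := hXlTS.trans Gl.TS_sub
    have hXrV : Xr ⊆ Gr.verts := hXrTS.trans Gr.TS_sub
    have hSlV : Sl ⊆ Gl.verts := hsubl
    have hSrV : Sr ⊆ Gr.verts := hsubr
    have hdX : Disjoint Xl Xr := hdisj.mono hXlV hXrV
    obtain ⟨g, hg1, hg2⟩ := pairUp Xl Xr (hXlc.trans hXrc.symm) hdX
    set F : α → α := fun v => if v ∈ Xl ∪ Xr then g v else if v ∈ Sl then fl v else fr v
      with hF
    have hAdm : G.Adm 0 (Sl ∪ Sr) := by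
      refine ⟨?_, ?_, ∅, Finset.empty_subset _, Finset.card_empty, F, ?_⟩
      · rw [hverts]; exact Finset.union_subset_union hSlV hSrV
      · intro v hv hvts
        rw [hverts, Finset.mem_union] at hv
        rcases hv with hv | hv
        · have hvl : v ∉ Gl.TS := fun h => hvts (by rw [hts]; exact Finset.mem_union_left _ h)
          rcases hdoml v hv hvl with h | ⟨u, hu, hadjl⟩
          · exact Or.inl (Finset.mem_union_left _ h)
          · exact Or.inr ⟨u, Finset.mem_union_left _ hu, (hadj u v).mpr (Or.inl hadjl)⟩
        · have hvr : v ∉ Gr.TS := fun h => hvts (by rw [hts]; exact Finset.mem_union_right _ h)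
          rcases hdomr v hv hvr with h | ⟨u, hu, hadjr⟩
          · exact Or.inl (Finset.mem_union_right _ h)
          · exact Or.inr ⟨u, Finset.mem_union_right _ hu, (hadj u v).mpr (Or.inr (Or.inl hadjr))⟩
      · rw [Finset.sdiff_empty]
        intro v hv
        rw [Finset.mem_union] at hv
        by_cases hvX : v ∈ Xl ∪ Xr
        · rw [Finset.mem_union] at hvX
          rcases hvX with hvXl | hvXr
          · obtain ⟨hgv, hggv⟩ := hg1 v hvXl
            have hFv : F v = g v := by simp [hF, Finset.mem_union, hvXl]
            have hFgv : F (g v) = g (g v) := by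
              simp [hF, Finset.mem_union, hgv]
            rw [hFv, hFgv, hggv]
            refine ⟨Finset.mem_union_right _ (hXrSr hgv), ?_, rfl⟩
            exact (hadj v (g v)).mpr (Or.inr (Or.inr (Or.inl ⟨hXlTS hvXl, hXrTS hgv⟩)))
          · obtain ⟨hgv, hggv⟩ := hg2 v hvXr
            have hFv : F v = g v := by simp [hF, Finset.mem_union, hvXr]
            have hFgv : F (g v) = g (g v) := by
              simp [hF, Finset.mem_union, hgv]
            rw [hFv, hFgv, hggv]
            refine ⟨Finset.mem_union_left _ (hXlSl hgv), ?_, rfl⟩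
            exact (hadj v (g v)).mpr (Or.inr (Or.inr (Or.inr ⟨hXrTS hvXr, hXlTS hgv⟩)))
        · rw [Finset.mem_union, not_or] at hvX
          obtain ⟨hvXl, hvXr⟩ := hvX
          rcases hv with hvS | hvS
          · have hFv : F v = fl v := by
              simp [hF, Finset.mem_union, hvXl, hvXr, hvS]
            obtain ⟨hm, hadjv, hinv⟩ := hfl v (Finset.mem_sdiff.mpr ⟨hvS, hvXl⟩)
            rw [Finset.mem_sdiff] at hm
            have hflvV : fl v ∈ Gl.verts := hSlV hm.1
            have hflvXr : fl v ∉ Xr := fun h => (Finset.disjoint_left.mp hdisj hflvV) (hXrV h)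
            have hFfv : F (fl v) = fl (fl v) := by
              simp [hF, Finset.mem_union, hm.2, hflvXr, hm.1]
            rw [hFv, hFfv, hinv]
            exact ⟨Finset.mem_union_left _ hm.1, (hadj v (fl v)).mpr (Or.inl hadjv), rfl⟩
          · have hvSl : v ∉ Sl := fun h => (Finset.disjoint_left.mp hdisj (hSlV h)) (hSrV hvS)
            have hFv : F v = fr v := by
              simp [hF, Finset.mem_union, hvXl, hvXr, hvSl]
            obtain ⟨hm, hadjv, hinv⟩ := hfr v (Finset.mem_sdiff.mpr ⟨hvS, hvXr⟩)
            rw [Finset.mem_sdiff] at hm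
            have hfrvV : fr v ∈ Gr.verts := hSrV hm.1
            have hfrvXl : fr v ∉ Xl := fun h => (Finset.disjoint_left.mp hdisj (hXlV h)) hfrvV
            have hfrvSl : fr v ∉ Sl := fun h => (Finset.disjoint_left.mp hdisj (hSlV h)) hfrvV
            have hFfv : F (fr v) = fr (fr v) := by
              simp [hF, Finset.mem_union, hm.2, hfrvXl, hfrvSl]
            rw [hFv, hFfv, hinv]
            exact ⟨Finset.mem_union_right _ hm.1, (hadj v (fr v)).mpr (Or.inr (Or.inl hadjv)), rfl⟩
    calc G.gamma 0 ≤ (Sl ∪ Sr).card := Nat.sInf_le ⟨Sl ∪ Sr, hAdm, rfl⟩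
      _ ≤ Sl.card + Sr.card := Finset.card_union_le _ _
      _ = Gl.gamma i + Gr.gamma i := by rw [hcl, hcr]; rfl
  · -- sInf RHS ≤ γ0(G)
    have hG0ne : {n | ∃ S, G.Adm 0 S ∧ S.card = n}.Nonempty := by
      obtain ⟨S, hS⟩ := hG 0 (Nat.zero_le _); exact ⟨S.card, S, hS.1, rfl⟩
    obtain ⟨S, hS, hcS⟩ := Nat.sInf_mem hG0ne
    obtain ⟨hsub, hdom, X, hXsub, hXc, f, hf⟩ := hS
    rw [Finset.card_eq_zero] at hXc
    subst hXc
    rw [Finset.sdiff_empty] at hf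
    have hsub' : S ⊆ Gl.verts ∪ Gr.verts := by rw [← hverts]; exact hsub
    set Sl := S ∩ Gl.verts with hSldef
    set Sr := S ∩ Gr.verts with hSrdef
    set Xl := Sl.filter (fun v => f v ∈ Gr.verts) with hXldef
    set Xr := Sr.filter (fun v => f v ∈ Gl.verts) with hXrdef
    have hSlV : Sl ⊆ Gl.verts := Finset.inter_subset_right
    have hSrV : Sr ⊆ Gr.verts := Finset.inter_subset_right
    have hSlS : Sl ⊆ S := Finset.inter_subset_left
    have hSrS : Sr ⊆ S := Finset.inter_subset_left
    have hmemlr : ∀ v ∈ S, v ∈ Gl.verts ∨ v ∈ Gr.verts := fun v hv =>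
      Finset.mem_union.mp (hsub' hv)
    -- cross edges are between twin sets
    have hcross : ∀ v ∈ S, v ∈ Gl.verts → f v ∈ Gr.verts → v ∈ Gl.TS ∧ f v ∈ Gr.TS := by
      intro v hv hvl hfvr
      obtain ⟨_, hadjv, _⟩ := hf v hv
      rcases (hadj v (f v)).mp hadjv with h | h | h | h
      · exact absurd ((Gl.adj_mem _ _ h).2) (Finset.disjoint_right.mp hdisj hfvr)
      · exact absurd ((Gr.adj_mem _ _ h).1) (Finset.disjoint_left.mp hdisj hvl)
      · exact h
      · exact absurd (Gr.TS_sub h.1) (Finset.disjoint_left.mp hdisj hvl)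
    have hcross' : ∀ v ∈ S, v ∈ Gr.verts → f v ∈ Gl.verts → v ∈ Gr.TS ∧ f v ∈ Gl.TS := by
      intro v hv hvr hfvl
      obtain ⟨_, hadjv, _⟩ := hf v hv
      rcases (hadj v (f v)).mp hadjv with h | h | h | h
      · exact absurd ((Gl.adj_mem _ _ h).1) (Finset.disjoint_right.mp hdisj hvr)
      · exact absurd ((Gr.adj_mem _ _ h).2) (Finset.disjoint_left.mp hdisj hfvl)
      · exact absurd (Gl.TS_sub h.1) (Finset.disjoint_right.mp hdisj hvr)
      · exact h
    have hXlTS : Xl ⊆ Sl ∩ Gl.TS := by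
      intro v hv
      rw [hXldef, Finset.mem_filter] at hv
      exact Finset.mem_inter.mpr ⟨hv.1,
        (hcross v (hSlS hv.1) (hSlV hv.1) hv.2).1⟩
    have hXrTS : Xr ⊆ Sr ∩ Gr.TS := by
      intro v hv
      rw [hXrdef, Finset.mem_filter] at hv
      exact Finset.mem_inter.mpr ⟨hv.1,
        (hcross' v (hSrS hv.1) (hSrV hv.1) hv.2).1⟩
    have hfXl : ∀ v ∈ Xl, f v ∈ Xr := by
      intro v hv
      rw [hXldef, Finset.mem_filter] at hv
      obtain ⟨hfvS, _, hinv⟩ := hf v (hSlS hv.1)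
      rw [hXrdef, Finset.mem_filter]
      exact ⟨Finset.mem_inter.mpr ⟨hfvS, hv.2⟩, by rw [hinv]; exact hSlV hv.1⟩
    have hfXr : ∀ v ∈ Xr, f v ∈ Xl := by
      intro v hv
      rw [hXrdef, Finset.mem_filter] at hv
      obtain ⟨hfvS, _, hinv⟩ := hf v (hSrS hv.1)
      rw [hXldef, Finset.mem_filter]
      exact ⟨Finset.mem_inter.mpr ⟨hfvS, hv.2⟩, by rw [hinv]; exact hSrV hv.1⟩
    have hcardX : Xl.card = Xr.card := by
      refine Finset.card_bij (fun a _ => f a) hfXl ?_ ?_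
      · intro a₁ ha₁ a₂ ha₂ h
        change f a₁ = f a₂ at h
        have h1 := (hf a₁ (hSlS (Finset.mem_of_mem_filter _ ha₁))).2.2
        have h2 := (hf a₂ (hSlS (Finset.mem_of_mem_filter _ ha₂))).2.2
        rw [← h1, ← h2, h]
      · intro b hb
        refine ⟨f b, hfXr b hb, (hf b (hSrS (Finset.mem_of_mem_filter _ hb))).2.2⟩
    have hil : Xl.card ≤ Gl.TS.card :=
      Finset.card_le_card (hXlTS.trans Finset.inter_subset_right)
    have hir : Xl.card ≤ Gr.TS.card := by
      rw [hcardX]; exact Finset.card_le_card (hXrTS.trans Finset.inter_subset_right)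
    -- Sl is admissible for Gl with k = Xl.card
    have hAdml : Gl.Adm Xl.card Sl := by
      refine ⟨hSlV, ?_, Xl, hXlTS, rfl, f, ?_⟩
      · intro v hv hvts
        have hvG : v ∈ G.verts := by rw [hverts]; exact Finset.mem_union_left _ hv
        have hvGTS : v ∉ G.TS := by
          rw [hts, Finset.mem_union]
          rintro (h | h)
          · exact hvts h
          · exact Finset.disjoint_left.mp hdisj hv (Gr.TS_sub h)
        rcases hdom v hvG hvGTS with h | ⟨u, hu, hadju⟩
        · exact Or.inl (Finset.mem_inter.mpr ⟨h, hv⟩)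
        · rcases (hadj u v).mp hadju with h | h | h | h
          · exact Or.inr ⟨u, Finset.mem_inter.mpr ⟨hu, (Gl.adj_mem _ _ h).1⟩, h⟩
          · exact absurd ((Gr.adj_mem _ _ h).2) (Finset.disjoint_left.mp hdisj hv)
          · exact absurd (Gr.TS_sub h.2) (Finset.disjoint_left.mp hdisj hv)
          · exact absurd h.2 hvts
      · intro v hv
        rw [Finset.mem_sdiff] at hv
        obtain ⟨hvSl, hvXl⟩ := hv
        have hvS : v ∈ S := hSlS hvSl
        have hvVl : v ∈ Gl.verts := hSlV hvSl
        obtain ⟨hfvS, hadjv, hinv⟩ := hf v hvS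
        have hfvVl : f v ∈ Gl.verts := by
          rcases hmemlr (f v) hfvS with h | h
          · exact h
          · exact absurd (by rw [hXldef, Finset.mem_filter]; exact ⟨hvSl, h⟩ : v ∈ Xl) hvXl
        have hfvSl : f v ∈ Sl := Finset.mem_inter.mpr ⟨hfvS, hfvVl⟩
        have hfvXl : f v ∉ Xl := by
          intro h
          rw [hXldef, Finset.mem_filter, hinv] at h
          exact Finset.disjoint_left.mp hdisj hvVl h.2
        refine ⟨Finset.mem_sdiff.mpr ⟨hfvSl, hfvXl⟩, ?_, hinv⟩
        rcases (hadj v (f v)).mp hadjv with h | h | h | h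
        · exact h
        · exact absurd ((Gr.adj_mem _ _ h).1) (Finset.disjoint_left.mp hdisj hvVl)
        · exact absurd (Gr.TS_sub h.2) (Finset.disjoint_left.mp hdisj hfvVl)
        · exact absurd (Gr.TS_sub h.1) (Finset.disjoint_left.mp hdisj hvVl)
    have hAdmr : Gr.Adm Xl.card Sr := by
      refine ⟨hSrV, ?_, Xr, hXrTS, hcardX.symm, f, ?_⟩
      · intro v hv hvts
        have hvG : v ∈ G.verts := by rw [hverts]; exact Finset.mem_union_right _ hv
        have hvGTS : v ∉ G.TS := by
          rw [hts, Finset.mem_union]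
          rintro (h | h)
          · exact Finset.disjoint_right.mp hdisj hv (Gl.TS_sub h)
          · exact hvts h
        rcases hdom v hvG hvGTS with h | ⟨u, hu, hadju⟩
        · exact Or.inl (Finset.mem_inter.mpr ⟨h, hv⟩)
        · rcases (hadj u v).mp hadju with h | h | h | h
          · exact absurd ((Gl.adj_mem _ _ h).2) (Finset.disjoint_right.mp hdisj hv)
          · exact Or.inr ⟨u, Finset.mem_inter.mpr ⟨hu, (Gr.adj_mem _ _ h).1⟩, h⟩
          · exact absurd h.2 hvts
          · exact absurd (Gl.TS_sub h.2) (Finset.disjoint_right.mp hdisj hv)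
      · intro v hv
        rw [Finset.mem_sdiff] at hv
        obtain ⟨hvSr, hvXr⟩ := hv
        have hvS : v ∈ S := hSrS hvSr
        have hvVr : v ∈ Gr.verts := hSrV hvSr
        obtain ⟨hfvS, hadjv, hinv⟩ := hf v hvS
        have hfvVr : f v ∈ Gr.verts := by
          rcases hmemlr (f v) hfvS with h | h
          · exact absurd (by rw [hXrdef, Finset.mem_filter]; exact ⟨hvSr, h⟩ : v ∈ Xr) hvXr
          · exact h
        have hfvSr : f v ∈ Sr := Finset.mem_inter.mpr ⟨hfvS, hfvVr⟩
        have hfvXr : f v ∉ Xr := by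
          intro h
          rw [hXrdef, Finset.mem_filter, hinv] at h
          exact Finset.disjoint_left.mp hdisj h.2 hvVr
        refine ⟨Finset.mem_sdiff.mpr ⟨hfvSr, hfvXr⟩, ?_, hinv⟩
        rcases (hadj v (f v)).mp hadjv with h | h | h | h
        · exact absurd ((Gl.adj_mem _ _ h).1) (Finset.disjoint_right.mp hdisj hvVr)
        · exact h
        · exact absurd (Gl.TS_sub h.1) (Finset.disjoint_right.mp hdisj hvVr)
        · exact absurd (Gl.TS_sub h.2) (Finset.disjoint_right.mp hdisj hfvVr)
    have hgl : Gl.gamma Xl.card ≤ Sl.card := Nat.sInf_le ⟨Sl, hAdml, rfl⟩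
    have hgr : Gr.gamma Xl.card ≤ Sr.card := Nat.sInf_le ⟨Sr, hAdmr, rfl⟩
    have hScard : Sl.card + Sr.card = S.card := by
      rw [← Finset.card_union_of_disjoint (hdisj.mono hSlV hSrV), hSldef, hSrdef,
        ← Finset.inter_union_distrib_left, Finset.inter_eq_left.mpr hsub']
    calc sInf {n | ∃ i ≤ min Gl.TS.card Gr.TS.card, Gl.gamma i + Gr.gamma i = n}
        ≤ Gl.gamma Xl.card + Gr.gamma Xl.card :=
          Nat.sInf_le ⟨Xl.card, le_min hil hir, rfl⟩
      _ ≤ Sl.card + Sr.card := Nat.add_le_add hgl hgr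
      _ = S.card := hScard
      _ = G.gamma 0 := hcS
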